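/- If H is a positive semi-definite operator on a finite-dimensional real inner product space and C is positive semi-definite, then H C H ≤ Tr(H C) · H in the Loewner order. -/

import Mathlib

open Matrix Finset
open scoped MatrixOrder

lemma psd_le_trace_smul_one {n : Type*} [Fintype n] [DecidableEq n]
    {A : Matrix n n ℝ} (hA : A.PosSemidef) :
    (A.trace • (1 : Matrix n n ℝ) - A).PosSemidef := by
  set B := CFC.sqrt A with hBdef
  have hB : B * B = A := CFC.sqrt_mul_sqrt_self A hA.nonneg
  have hBH : Bᵀ = B := by
    have := (CFC.sqrt_nonneg A).posSemidef.isHermitian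
    rwa [Matrix.IsHermitian, Matrix.conjTranspose_eq_transpose_of_trivial] at this
  refine PosSemidef.of_dotProduct_mulVec_nonneg ?_ ?_
  · have h1 := hA.isHermitian
    simp [Matrix.IsHermitian] at h1 ⊢
    simp [Matrix.conjTranspose_sub, Matrix.conjTranspose_smul, h1]
  · intro x
    have hx : star x = x := by simp
    have key : x ⬝ᵥ (A *ᵥ x) = ∑ i, (B *ᵥ x) i ^ 2 := by
      rw [← hB, ← Matrix.mulVec_mulVec, dotProduct_mulVec, ← Matrix.mulVec_transpose, hBH]
      simp [dotProduct, sq]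
    have htr : A.trace = ∑ i, ∑ j, B i j ^ 2 := by
      rw [← hB]
      simp only [Matrix.trace, Matrix.diag, Matrix.mul_apply]
      refine Finset.sum_congr rfl fun i _ => Finset.sum_congr rfl fun j _ => ?_
      rw [sq]
      congr 1
      conv_lhs => rw [← hBH]
      rfl
    have hle : ∑ i, (B *ᵥ x) i ^ 2 ≤ A.trace * (x ⬝ᵥ x) := by
      rw [htr, Finset.sum_mul]
      refine Finset.sum_le_sum fun i _ => ?_
      have := Finset.sum_mul_sq_le_sq_mul_sq Finset.univ (fun j => B i j) x
      simpa [Matrix.mulVec, dotProduct, sq] using this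
    rw [hx]
    have : (A.trace • (1 : Matrix n n ℝ) - A) *ᵥ x = A.trace • x - A *ᵥ x := by
      simp [Matrix.sub_mulVec, Matrix.smul_mulVec]
    rw [this]
    simp only [dotProduct_sub, dotProduct_smul, smul_eq_mul]
    rw [key]
    linarith

/-- If `H` is positive semi-definite and `C` is positive semi-definite, then
`H C H ≤ Tr(H C) • H` in the Loewner order. -/
theorem stmt_0 {n : Type*} [Fintype n] [DecidableEq n]
    (H C : Matrix n n ℝ) (hH : H.PosSemidef) (hC : C.PosSemidef) :
    ((H * C).trace • H - H * C * H).PosSemidef := by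
  set S := CFC.sqrt H with hSdef
  have hS : S * S = H := CFC.sqrt_mul_sqrt_self H hH.nonneg
  have hSH : Sᴴ = S := (CFC.sqrt_nonneg H).posSemidef.isHermitian
  have hSCS : (S * C * S).PosSemidef := by
    have := hC.conjTranspose_mul_mul_same S
    rwa [hSH] at this
  have htr : (S * C * S).trace = (H * C).trace := by
    rw [Matrix.trace_mul_cycle, hS]
  have h := (psd_le_trace_smul_one hSCS).mul_mul_conjTranspose_same S
  rw [hSH] at h
  have heq : S * ((S * C * S).trace • (1 : Matrix n n ℝ) - S * C * S) * S
      = (H * C).trace • H - H * C * H := by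
    rw [htr, Matrix.mul_sub, Matrix.sub_mul]
    congr 1
    · rw [Matrix.mul_smul, Matrix.mul_one, Matrix.smul_mul, hS]
    · rw [← hS]
      noncomm_ring
  rwa [heq] at h
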